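/- (Stopped barrier process is a nonnegative supermartingale.) Suppose B : ℝⁿ → ℝ is a barrier certificate candidate with B(s) ≥ 0 for all s ∈ S and ∫ B(g(s,δ)) dμ(δ) ≤ B(s) for all s ∈ S \ S_u. Fix s₀ ∈ S. On the probability space ((ℝⁿ)^ℕ, μ^⊗ℕ), let ℱ_t be the σ-algebra generated by the coordinate projections ω ↦ ω(0), …, ω(t−1), let κ(ω) = inf{ t ∈ ℕ : traj(s₀,ω)(t) ∈ S_u } (with κ(ω) = ∞ if the trajectory never enters S_u), and define X̃_t(ω) = B( traj(s₀,ω)( min(t, κ(ω)) ) ). Then (X̃_t)_{t∈ℕ} is a nonnegative supermartingale with respect to the filtration (ℱ_t)_{t∈ℕ} and the measure μ^⊗ℕ. -/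

import Mathlib

open MeasureTheory

/-- Trajectory of a perturbed discrete-time control system. -/
def traj {n : ℕ} (g : (Fin n → ℝ) → (Fin n → ℝ) → (Fin n → ℝ))
    (s₀ : Fin n → ℝ) (ω : ℕ → Fin n → ℝ) : ℕ → Fin n → ℝ
  | 0 => s₀
  | t + 1 => g (traj g s₀ ω t) (ω t)

/-- The filtration on noise sequences in which `ℱ t` is the σ-algebra generated by
the coordinate projections `ω ↦ ω 0, …, ω (t-1)`. -/
def coordFiltration (E : Type*) [MeasurableSpace E] :
    Filtration ℕ (inferInstance : MeasurableSpace (ℕ → E)) where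
  seq t := ⨆ (j : ℕ) (_ : j < t),
    MeasurableSpace.comap (fun ω : ℕ → E => ω j) inferInstance
  mono' := by
    intro i j hij
    exact iSup_mono fun k => iSup_mono' fun hk => ⟨lt_of_lt_of_le hk hij, le_rfl⟩
  le' := by
    intro t
    exact iSup_le fun k => iSup_le fun _ => (measurable_pi_apply k).comap_le

/-- The first hitting time `κ` of the unsafe set `Su` (equal to `∞` if the
trajectory never enters `Su`). -/
noncomputable def hitTime {n : ℕ} (g : (Fin n → ℝ) → (Fin n → ℝ) → (Fin n → ℝ))
    (Su : Set (Fin n → ℝ)) (s₀ : Fin n → ℝ) (ω : ℕ → Fin n → ℝ) : ℕ∞ :=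
  sInf {m : ℕ∞ | ∃ t : ℕ, (t : ℕ∞) = m ∧ traj g s₀ ω t ∈ Su}

/-- The stopped barrier process `X̃ t ω = B (traj s₀ ω (min t (κ ω)))`. -/
noncomputable def stoppedBarrier {n : ℕ}
    (g : (Fin n → ℝ) → (Fin n → ℝ) → (Fin n → ℝ)) (Su : Set (Fin n → ℝ))
    (B : (Fin n → ℝ) → ℝ) (s₀ : Fin n → ℝ) (t : ℕ) (ω : ℕ → Fin n → ℝ) : ℝ :=
  B (traj g s₀ ω (min (t : ℕ∞) (hitTime g Su s₀ ω)).toNat)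

namespace StoppedBarrierAux

open Classical in
/-- The stopped time `min t κ` as a recursively defined natural number. -/
noncomputable def stopN {n : ℕ} (g : (Fin n → ℝ) → (Fin n → ℝ) → (Fin n → ℝ))
    (Su : Set (Fin n → ℝ)) (s₀ : Fin n → ℝ) : ℕ → (ℕ → Fin n → ℝ) → ℕ
  | 0, _ => 0
  | t + 1, ω =>
    if traj g s₀ ω (stopN g Su s₀ t ω) ∈ Su then stopN g Su s₀ t ω else t + 1

variable {n : ℕ} {g : (Fin n → ℝ) → (Fin n → ℝ) → (Fin n → ℝ)}
  {Su : Set (Fin n → ℝ)} {s₀ : Fin n → ℝ} {ω ω' : ℕ → Fin n → ℝ}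

lemma stopN_zero : stopN g Su s₀ 0 ω = 0 := rfl

open Classical in
lemma stopN_succ (t : ℕ) :
    stopN g Su s₀ (t + 1) ω =
      if traj g s₀ ω (stopN g Su s₀ t ω) ∈ Su then stopN g Su s₀ t ω else t + 1 := rfl

lemma stopN_le (t : ℕ) : stopN g Su s₀ t ω ≤ t := by
  induction t with
  | zero => exact le_rfl
  | succ t ih =>
    rw [stopN_succ]
    split
    · exact ih.trans (Nat.le_succ t)
    · exact le_rfl

lemma stopN_eq_or_mem (t : ℕ) :
    stopN g Su s₀ t ω = t ∨ traj g s₀ ω (stopN g Su s₀ t ω) ∈ Su := by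
  induction t with
  | zero => exact Or.inl rfl
  | succ t ih =>
    rw [stopN_succ]
    by_cases h : traj g s₀ ω (stopN g Su s₀ t ω) ∈ Su
    · rw [if_pos h]; exact Or.inr h
    · rw [if_neg h]; exact Or.inl rfl

open Classical in
lemma stopN_eq_dite (t : ℕ) :
    stopN g Su s₀ t ω =
      if h : ∃ k, k ≤ t ∧ traj g s₀ ω k ∈ Su then Nat.find h else t := by
  induction t with
  | zero =>
    by_cases h : ∃ k, k ≤ 0 ∧ traj g s₀ ω k ∈ Su
    · rw [dif_pos h, stopN_zero]
      exact (Nat.le_zero.mp (Nat.find_min' h ⟨le_rfl, by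
        obtain ⟨k, hk0, hk⟩ := h
        rwa [Nat.le_zero.mp hk0] at hk⟩)).symm
    · rw [dif_neg h, stopN_zero]
  | succ t ih =>
    rw [stopN_succ, ih]
    by_cases h : ∃ k, k ≤ t ∧ traj g s₀ ω k ∈ Su
    · rw [dif_pos h] at *
      have hspec := Nat.find_spec h
      rw [if_pos hspec.2]
      have h' : ∃ k, k ≤ t + 1 ∧ traj g s₀ ω k ∈ Su :=
        ⟨Nat.find h, hspec.1.trans (Nat.le_succ t), hspec.2⟩
      rw [dif_pos h']
      refine le_antisymm (Nat.find_min' h ⟨?_, (Nat.find_spec h').2⟩)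
        (Nat.find_min' h' ⟨hspec.1.trans (Nat.le_succ t), hspec.2⟩)
      exact (Nat.find_min' h' ⟨hspec.1.trans (Nat.le_succ t), hspec.2⟩).trans hspec.1
    · rw [dif_neg h]
      have hmem : traj g s₀ ω t ∉ Su := fun hc => h ⟨t, le_rfl, hc⟩
      rw [if_neg hmem]
      by_cases h' : ∃ k, k ≤ t + 1 ∧ traj g s₀ ω k ∈ Su
      · rw [dif_pos h']
        refine le_antisymm ?_ (Nat.find_spec h').1
        by_contra hc
        push_neg at hc
        exact h ⟨Nat.find h', Nat.lt_succ_iff.mp hc, (Nat.find_spec h').2⟩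
      · rw [dif_neg h']

lemma hitTime_eq_top (h : ∀ k, traj g s₀ ω k ∉ Su) : hitTime g Su s₀ ω = ⊤ := by
  have : {m : ℕ∞ | ∃ t : ℕ, (t : ℕ∞) = m ∧ traj g s₀ ω t ∈ Su} = ∅ := by
    ext m
    simp only [Set.mem_setOf_eq, Set.mem_empty_iff_false, iff_false]
    rintro ⟨t, -, ht⟩
    exact h t ht
  rw [hitTime, this, sInf_empty]

open Classical in
lemma hitTime_eq_find (h : ∃ k, traj g s₀ ω k ∈ Su) :
    hitTime g Su s₀ ω = (Nat.find h : ℕ∞) := by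
  refine le_antisymm (sInf_le ⟨Nat.find h, rfl, Nat.find_spec h⟩) (le_sInf ?_)
  rintro m ⟨k, rfl, hk⟩
  exact_mod_cast Nat.find_min' h hk

open Classical in
lemma toNat_min_hitTime (t : ℕ) :
    (min (t : ℕ∞) (hitTime g Su s₀ ω)).toNat = stopN g Su s₀ t ω := by
  rw [stopN_eq_dite]
  by_cases hex : ∃ k, traj g s₀ ω k ∈ Su
  · rw [hitTime_eq_find hex]
    have hmin : (min (t : ℕ∞) (Nat.find hex : ℕ∞)).toNat = min t (Nat.find hex) := by
      rcases le_total t (Nat.find hex) with h | h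
      · rw [min_eq_left (by exact_mod_cast h), ENat.toNat_coe, min_eq_left h]
      · rw [min_eq_right (by exact_mod_cast h), ENat.toNat_coe, min_eq_right h]
    rw [hmin]
    by_cases h : ∃ k, k ≤ t ∧ traj g s₀ ω k ∈ Su
    · rw [dif_pos h]
      have h1 : Nat.find hex = Nat.find h := by
        refine le_antisymm (Nat.find_min' hex (Nat.find_spec h).2)
          (Nat.find_min' h ⟨?_, Nat.find_spec hex⟩)
        exact (Nat.find_min' hex (Nat.find_spec h).2).trans (Nat.find_spec h).1
      rw [h1, min_eq_right (Nat.find_spec h).1]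
    · rw [dif_neg h]
      refine min_eq_left ?_
      by_contra hc
      push_neg at hc
      exact h ⟨Nat.find hex, le_of_lt hc, Nat.find_spec hex⟩
  · push_neg at hex
    rw [hitTime_eq_top hex, dif_neg (fun ⟨k, _, hk⟩ => hex k hk),
      min_eq_left le_top, ENat.toNat_coe]

lemma stoppedBarrier_eq_stopN {B : (Fin n → ℝ) → ℝ} (t : ℕ) :
    stoppedBarrier g Su B s₀ t ω = B (traj g s₀ ω (stopN g Su s₀ t ω)) := by
  rw [stoppedBarrier, toNat_min_hitTime]

lemma traj_congr (k : ℕ) (h : ∀ j < k, ω j = ω' j) :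
    traj g s₀ ω k = traj g s₀ ω' k := by
  induction k with
  | zero => rfl
  | succ k ih =>
    show g (traj g s₀ ω k) (ω k) = g (traj g s₀ ω' k) (ω' k)
    rw [ih (fun j hj => h j (hj.trans (Nat.lt_succ_self k))), h k (Nat.lt_succ_self k)]

lemma stopN_congr (t : ℕ) (h : ∀ j < t, ω j = ω' j) :
    stopN g Su s₀ t ω = stopN g Su s₀ t ω' := by
  induction t with
  | zero => rfl
  | succ t ih =>
    have h' : ∀ j < t, ω j = ω' j := fun j hj => h j (hj.trans (Nat.lt_succ_self t))
    have h1 := ih h'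
    rw [stopN_succ, stopN_succ, h1,
      traj_congr (g := g) (s₀ := s₀) (stopN g Su s₀ t ω') (fun j hj => h j
        (lt_of_lt_of_le hj ((stopN_le t).trans (Nat.le_succ t))))]

section Meas

variable {m : MeasurableSpace (ℕ → Fin n → ℝ)}

lemma measurable_traj_of (hg : Measurable (Function.uncurry g)) {t : ℕ}
    (hc : ∀ j < t, Measurable[m] fun ω : ℕ → Fin n → ℝ => ω j)
    {k : ℕ} (hk : k ≤ t) : Measurable[m] fun ω => traj g s₀ ω k := by
  induction k with
  | zero => exact measurable_const
  | succ k ih =>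
    have h1 : Measurable[m] fun ω => traj g s₀ ω k := ih ((Nat.le_succ k).trans hk)
    have h2 : Measurable[m] fun ω : ℕ → Fin n → ℝ => ω k := hc k (lt_of_lt_of_le (Nat.lt_succ_self k) hk)
    exact hg.comp (h1.prodMk h2)

lemma measurable_traj_stopN (t : ℕ)
    (hst : Measurable[m] (stopN g Su s₀ t))
    (htraj : ∀ k ≤ t, Measurable[m] fun ω => traj g s₀ ω k) :
    Measurable[m] fun ω => traj g s₀ ω (stopN g Su s₀ t ω) := by
  intro V hV
  have : (fun ω => traj g s₀ ω (stopN g Su s₀ t ω)) ⁻¹' V =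
      ⋃ (k : ℕ) (_ : k ≤ t), (stopN g Su s₀ t ⁻¹' {k} ∩ (fun ω => traj g s₀ ω k) ⁻¹' V) := by
    ext ω
    simp only [Set.mem_preimage, Set.mem_iUnion, Set.mem_inter_iff, Set.mem_singleton_iff]
    constructor
    · intro h
      exact ⟨stopN g Su s₀ t ω, stopN_le t, rfl, h⟩
    · rintro ⟨k, -, hk, h⟩
      rwa [hk]
  rw [this]
  exact MeasurableSet.iUnion fun k => MeasurableSet.iUnion fun hk =>
    (hst (measurableSet_singleton k)).inter (htraj k hk hV)

open Classical in
lemma measurable_stopN (hg : Measurable (Function.uncurry g)) (hSu : MeasurableSet Su) (t : ℕ)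
    (hc : ∀ j < t, Measurable[m] fun ω : ℕ → Fin n → ℝ => ω j) :
    Measurable[m] (stopN g Su s₀ t) := by
  induction t with
  | zero => exact measurable_const
  | succ t ih =>
    have hc' : ∀ j < t, Measurable[m] fun ω : ℕ → Fin n → ℝ => ω j :=
      fun j hj => hc j (hj.trans (Nat.lt_succ_self t))
    have hst := ih hc'
    have htraj : ∀ k ≤ t, Measurable[m] fun ω => traj g s₀ ω k :=
      fun k hk => measurable_traj_of hg hc' hk
    have hts := measurable_traj_stopN t hst htraj
    have hD : MeasurableSet[m] {ω | traj g s₀ ω (stopN g Su s₀ t ω) ∈ Su} := hts hSu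
    have : (stopN g Su s₀ (t + 1) : (ℕ → Fin n → ℝ) → ℕ) = fun ω =>
        if traj g s₀ ω (stopN g Su s₀ t ω) ∈ Su then stopN g Su s₀ t ω else t + 1 := rfl
    rw [this]
    exact Measurable.ite hD hst measurable_const

end Meas

/-- Extend a finite tuple of noises to an infinite sequence by `0`. -/
noncomputable def extT {n : ℕ} (t : ℕ) (z : Fin t → Fin n → ℝ) : ℕ → Fin n → ℝ :=
  fun j => if h : j < t then z ⟨j, h⟩ else 0

lemma extT_restr {n : ℕ} (t : ℕ) (ω : ℕ → Fin n → ℝ) :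
    ∀ j < t, extT t (fun i : Fin t => ω (i : ℕ)) j = ω j := by
  intro j hj
  simp only [extT, dif_pos hj]

lemma restr_extT {n : ℕ} (t : ℕ) (z : Fin t → Fin n → ℝ) :
    (fun i : Fin t => extT t z (i : ℕ)) = z := by
  funext i
  simp only [extT, dif_pos i.isLt]

lemma measurable_extT {n : ℕ} (t : ℕ) : Measurable (extT (n := n) t) := by
  apply measurable_pi_lambda
  intro j
  by_cases h : j < t
  · simp only [extT, dif_pos h]
    exact measurable_pi_apply _
  · simp only [extT, dif_neg h]
    exact measurable_const

lemma measurable_restr {n : ℕ} (T : ℕ) :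
    Measurable fun (ω : ℕ → Fin n → ℝ) (i : Fin T) => ω (i : ℕ) :=
  measurable_pi_lambda _ fun i => measurable_pi_apply _

end StoppedBarrierAux

open StoppedBarrierAux in
/-- The stopped barrier process is a nonnegative supermartingale. -/
theorem stopped_barrier_nonneg_supermartingale
    {n : ℕ} (S S₀ Su W : Set (Fin n → ℝ))
    (g : (Fin n → ℝ) → (Fin n → ℝ) → (Fin n → ℝ))
    (μ : Measure (Fin n → ℝ)) [IsProbabilityMeasure μ]
    (hS : MeasurableSet S) (hS₀ : MeasurableSet S₀) (hSu : MeasurableSet Su)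
    (hS₀S : S₀ ⊆ S) (hSuS : Su ⊆ S) (hdisj : S₀ ∩ Su = ∅)
    (hg : Measurable (Function.uncurry g))
    -- `W` is the support of the noise distribution `μ`
    (hW : W = {δ | ∀ U : Set (Fin n → ℝ), IsOpen U → δ ∈ U → 0 < μ U})
    (hgS : ∀ s ∈ S, ∀ δ ∈ W, g s δ ∈ S)
    -- `P` is the countable product measure `μ^⊗ℕ` on noise sequences,
    -- characterized by its values on finite cylinders
    (P : Measure (ℕ → Fin n → ℝ)) [IsProbabilityMeasure P]
    (hP : ∀ (T : ℕ) (A : Fin T → Set (Fin n → ℝ)), (∀ i, MeasurableSet (A i)) →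
      P {ω | ∀ i : Fin T, ω (i : ℕ) ∈ A i} = ∏ i, μ (A i))
    -- the barrier certificate candidate: a bounded Borel-measurable function
    (B : (Fin n → ℝ) → ℝ) (hBmeas : Measurable B) (hBbdd : ∃ C, ∀ s, |B s| ≤ C)
    (hnonneg : ∀ s ∈ S, 0 ≤ B s)
    (hdec : ∀ s ∈ S \ Su, ∫ δ, B (g s δ) ∂μ ≤ B s)
    (s₀ : Fin n → ℝ) (hs₀ : s₀ ∈ S) :
    Supermartingale (stoppedBarrier g Su B s₀) (coordFiltration (Fin n → ℝ)) P ∧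
      ∀ t : ℕ, 0 ≤ᵐ[P] stoppedBarrier g Su B s₀ t := by
  classical
  obtain ⟨C, hC⟩ := hBbdd
  -- facts about the support W
  have hWc : Wᶜ = ⋃₀ {U : Set (Fin n → ℝ) | IsOpen U ∧ μ U = 0} := by
    ext δ
    simp only [Set.mem_compl_iff, hW, Set.mem_setOf_eq, Set.mem_sUnion]
    constructor
    · intro h
      push_neg at h
      obtain ⟨U, hUo, hδU, hU0⟩ := h
      exact ⟨U, ⟨hUo, le_antisymm hU0 zero_le⟩, hδU⟩
    · rintro ⟨U, ⟨hUo, hU0⟩, hδU⟩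
      push_neg
      exact ⟨U, hUo, hδU, by simp [hU0]⟩
  have hWmeas : MeasurableSet W := by
    have h1 : IsOpen Wᶜ := by
      rw [hWc]
      exact isOpen_sUnion fun U hU => hU.1
    have := h1.measurableSet.compl
    rwa [compl_compl] at this
  have hμWc : μ Wᶜ = 0 := by
    obtain ⟨b, hbc, -, hbasis⟩ := TopologicalSpace.exists_countable_basis (Fin n → ℝ)
    have hsub : Wᶜ ⊆ ⋃₀ {u ∈ b | μ u = 0} := by
      intro δ hδ
      rw [hWc] at hδ
      obtain ⟨U, ⟨hUo, hU0⟩, hδU⟩ := hδ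
      obtain ⟨v, hvb, hδv, hvU⟩ := hbasis.exists_subset_of_mem_open hδU hUo
      exact ⟨v, ⟨hvb, le_antisymm (hU0 ▸ measure_mono hvU) zero_le⟩, hδv⟩
    exact measure_mono_null hsub
      ((measure_sUnion_null_iff (hbc.mono (Set.sep_subset _ _))).2 fun u hu => hu.2)
  have hμW : μ W = 1 := by
    have h1 := measure_add_measure_compl hWmeas (μ := μ)
    rwa [hμWc, add_zero, measure_univ] at h1
  -- trajectories stay in S when noises lie in W
  have htrajS : ∀ (ω : ℕ → Fin n → ℝ) (k : ℕ), (∀ j < k, ω j ∈ W) → traj g s₀ ω k ∈ S := by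
    intro ω k
    induction k with
    | zero => intro _; exact hs₀
    | succ k ih =>
      intro h
      exact hgS _ (ih fun j hj => h j (hj.trans (Nat.lt_succ_self k))) _
        (h k (Nat.lt_succ_self k))
  -- almost every noise sequence has all coordinates in W
  have hgood : ∀ᵐ ω ∂P, ∀ j : ℕ, ω j ∈ W := by
    rw [MeasureTheory.ae_all_iff]
    intro j
    have h1 : P {ω : ℕ → Fin n → ℝ | ∀ i : Fin (j + 1), ω (i : ℕ) ∈ W} = 1 := by
      rw [hP (j + 1) (fun _ => W) fun _ => hWmeas]
      simp [hμW]
    have h2 : {ω : ℕ → Fin n → ℝ | ω j ∈ W}ᶜ ⊆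
        {ω : ℕ → Fin n → ℝ | ∀ i : Fin (j + 1), ω (i : ℕ) ∈ W}ᶜ := by
      apply Set.compl_subset_compl.2
      intro ω hω
      exact hω ⟨j, Nat.lt_succ_self j⟩
    have h3 : MeasurableSet {ω : ℕ → Fin n → ℝ | ∀ i : Fin (j + 1), ω (i : ℕ) ∈ W} := by
      have : {ω : ℕ → Fin n → ℝ | ∀ i : Fin (j + 1), ω (i : ℕ) ∈ W} =
          ⋂ i : Fin (j + 1), (fun ω : ℕ → Fin n → ℝ => ω (i : ℕ)) ⁻¹' W := by
        ext ω; simp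
      rw [this]
      exact MeasurableSet.iInter fun i => (measurable_pi_apply _) hWmeas
    have h4 : P {ω : ℕ → Fin n → ℝ | ∀ i : Fin (j + 1), ω (i : ℕ) ∈ W}ᶜ = 0 := by
      rw [measure_compl h3 (measure_ne_top _ _), h1, measure_univ, tsub_self]
    rw [MeasureTheory.ae_iff]
    exact measure_mono_null h2 h4
  -- coordinates are measurable w.r.t. the filtration
  have hcoordF : ∀ t : ℕ, ∀ j < t,
      Measurable[(coordFiltration (Fin n → ℝ)) t] fun ω : ℕ → Fin n → ℝ => ω j := by
    intro t j hj
    apply Measurable.of_comap_le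
    exact le_iSup₂ (f := fun (j : ℕ) (_ : j < t) =>
      MeasurableSpace.comap (fun ω : ℕ → Fin n → ℝ => ω j) inferInstance) j hj
  have htrajmeasF : ∀ t : ℕ, ∀ k ≤ t,
      Measurable[(coordFiltration (Fin n → ℝ)) t] fun ω => traj g s₀ ω k :=
    fun t k hk => measurable_traj_of hg (hcoordF t) hk
  have hstopmeasF : ∀ t : ℕ,
      Measurable[(coordFiltration (Fin n → ℝ)) t] (stopN g Su s₀ t) :=
    fun t => measurable_stopN hg hSu t (hcoordF t)
  have htsF : ∀ t : ℕ, Measurable[(coordFiltration (Fin n → ℝ)) t]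
      fun ω => traj g s₀ ω (stopN g Su s₀ t ω) :=
    fun t => measurable_traj_stopN t (hstopmeasF t) (htrajmeasF t)
  have hXeq : ∀ t : ℕ, stoppedBarrier g Su B s₀ t =
      fun ω => B (traj g s₀ ω (stopN g Su s₀ t ω)) :=
    fun t => funext fun ω => stoppedBarrier_eq_stopN t
  have hXmeasF : ∀ t : ℕ,
      Measurable[(coordFiltration (Fin n → ℝ)) t] (stoppedBarrier g Su B s₀ t) := by
    intro t
    rw [hXeq t]
    exact hBmeas.comp (htsF t)
  have hXmeas : ∀ t : ℕ, Measurable (stoppedBarrier g Su B s₀ t) :=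
    fun t => (hXmeasF t).mono ((coordFiltration (Fin n → ℝ)).le t) le_rfl
  have hXint : ∀ t : ℕ, Integrable (stoppedBarrier g Su B s₀ t) P := by
    intro t
    refine ⟨(hXmeas t).aestronglyMeasurable, ?_⟩
    apply MeasureTheory.HasFiniteIntegral.of_bounded (C := C)
    filter_upwards with ω
    rw [Real.norm_eq_abs]
    exact hC _
  have hnn : ∀ t : ℕ, 0 ≤ᵐ[P] stoppedBarrier g Su B s₀ t := by
    intro t
    filter_upwards [hgood] with ω hω
    rw [Pi.zero_apply, stoppedBarrier_eq_stopN]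
    exact hnonneg _ (htrajS ω _ fun j _ => hω j)
  refine ⟨supermartingale_of_setIntegral_succ_le
    (fun t => (hXmeasF t).stronglyMeasurable) hXint ?_, hnn⟩
  intro t A hA
  -- the event that the trajectory has already been stopped
  set D : Set (ℕ → Fin n → ℝ) := {ω | traj g s₀ ω (stopN g Su s₀ t ω) ∈ Su} with hDdef
  have hDF : MeasurableSet[(coordFiltration (Fin n → ℝ)) t] D := htsF t hSu
  have hFle := (coordFiltration (Fin n → ℝ)).le t
  have hXsucc : ∀ ω, stoppedBarrier g Su B s₀ (t + 1) ω =
      if ω ∈ D then stoppedBarrier g Su B s₀ t ω else B (g (traj g s₀ ω t) (ω t)) := by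
    intro ω
    rw [stoppedBarrier_eq_stopN, stoppedBarrier_eq_stopN, stopN_succ]
    by_cases h : traj g s₀ ω (stopN g Su s₀ t ω) ∈ Su
    · rw [if_pos h, if_pos (show ω ∈ D from h)]
    · rw [if_neg h, if_neg (show ω ∉ D from h)]
      rfl
  have hXt_eq : ∀ ω, ω ∉ D → stoppedBarrier g Su B s₀ t ω = B (traj g s₀ ω t) := by
    intro ω h
    rw [stoppedBarrier_eq_stopN, (stopN_eq_or_mem t).resolve_right h]
  -- split the set integrals along D
  have hsplit1 : ∫ ω in A, stoppedBarrier g Su B s₀ (t + 1) ω ∂P =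
      (∫ ω in A ∩ D, stoppedBarrier g Su B s₀ t ω ∂P) +
        ∫ ω in A \ D, B (g (traj g s₀ ω t) (ω t)) ∂P := by
    rw [← integral_inter_add_diff (hFle _ hDF) ((hXint (t + 1)).integrableOn (s := A))]
    congr 1
    · refine setIntegral_congr_fun (hFle _ (hA.inter hDF)) fun ω hω => ?_
      rw [hXsucc ω, if_pos hω.2]
    · refine setIntegral_congr_fun (hFle _ (hA.diff hDF)) fun ω hω => ?_
      rw [hXsucc ω, if_neg hω.2]
  have hsplit2 : ∫ ω in A, stoppedBarrier g Su B s₀ t ω ∂P =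
      (∫ ω in A ∩ D, stoppedBarrier g Su B s₀ t ω ∂P) +
        ∫ ω in A \ D, B (traj g s₀ ω t) ∂P := by
    rw [← integral_inter_add_diff (hFle _ hDF) ((hXint t).integrableOn (s := A))]
    congr 1
    exact setIntegral_congr_fun (hFle _ (hA.diff hDF)) fun ω hω => hXt_eq ω hω.2
  rw [hsplit1, hsplit2]
  refine add_le_add_right ?_ _
  -- it remains to prove the key one-step estimate on A \ D
  have hA'F : MeasurableSet[(coordFiltration (Fin n → ℝ)) t] (A \ D) := hA.diff hDF
  -- represent A \ D via the first t coordinates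
  have hsubcomap : (coordFiltration (Fin n → ℝ)) t ≤
      MeasurableSpace.comap (fun (ω : ℕ → Fin n → ℝ) (i : Fin t) => ω (i : ℕ))
        inferInstance := by
    refine iSup_le fun j => iSup_le fun hj => ?_
    have heq : (fun ω : ℕ → Fin n → ℝ => ω j) =
        (fun y : Fin t → Fin n → ℝ => y ⟨j, hj⟩) ∘
          fun (ω : ℕ → Fin n → ℝ) (i : Fin t) => ω (i : ℕ) := rfl
    rw [heq, ← MeasurableSpace.comap_comp]
    exact MeasurableSpace.comap_mono (measurable_pi_apply _).comap_le
  obtain ⟨A'', hA''m, hA''pre⟩ := MeasurableSpace.measurableSet_comap.mp (hsubcomap _ hA'F)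
  -- the trajectory at time t as a function of the first t coordinates
  have htrajFmeas : Measurable fun z : Fin t → Fin n → ℝ => traj g s₀ (extT t z) t :=
    (measurable_traj_of hg (m := inferInstance)
      (fun j _ => measurable_pi_apply j) le_rfl).comp (measurable_extT t)
  have htrajF_restr : ∀ ω : ℕ → Fin n → ℝ,
      traj g s₀ (extT t fun i : Fin t => ω (i : ℕ)) t = traj g s₀ ω t :=
    fun ω => traj_congr t (extT_restr t ω)
  -- pushforward of P under restriction to the first T coordinates
  have hmap : ∀ T : ℕ, Measure.map (fun (ω : ℕ → Fin n → ℝ) (i : Fin T) => ω (i : ℕ)) P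
      = Measure.pi fun _ : Fin T => μ := by
    intro T
    refine (Measure.pi_eq fun s hs => ?_).symm
    rw [Measure.map_apply (measurable_restr T) (MeasurableSet.univ_pi hs)]
    have hpre : (fun (ω : ℕ → Fin n → ℝ) (i : Fin T) => ω (i : ℕ)) ⁻¹'
        Set.pi Set.univ s = {ω | ∀ i : Fin T, ω (i : ℕ) ∈ s i} := by
      ext ω; simp [Set.mem_pi]
    rw [hpre, hP T s hs]
  -- rewrite the right-hand side as an integral over the finite product
  have hRHS : ∫ ω in A \ D, B (traj g s₀ ω t) ∂P =
      ∫ z, Set.indicator A'' (fun z => B (traj g s₀ (extT t z) t)) z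
        ∂(Measure.pi fun _ : Fin t => μ) := by
    rw [← integral_indicator (hFle _ hA'F)]
    have hpt : ∀ ω, Set.indicator (A \ D) (fun ω => B (traj g s₀ ω t)) ω =
        Set.indicator A'' (fun z => B (traj g s₀ (extT t z) t))
          ((fun (ω : ℕ → Fin n → ℝ) (i : Fin t) => ω (i : ℕ)) ω) := by
      intro ω
      by_cases h : ω ∈ A \ D
      · rw [Set.indicator_of_mem h, Set.indicator_of_mem (by rw [← hA''pre] at h; exact h),
          htrajF_restr]
      · rw [Set.indicator_of_notMem h,
          Set.indicator_of_notMem (fun hc => h (by rw [← hA''pre]; exact hc))]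
    simp_rw [hpt]
    rw [← hmap t]
    exact (integral_map (measurable_restr t).aemeasurable
      ((hBmeas.comp htrajFmeas).indicator hA''m).aestronglyMeasurable).symm
  -- rewrite the left-hand side as an integral over the finite product with t+1 factors
  have hcast : ∀ (ω : ℕ → Fin n → ℝ),
      (fun i : Fin t => ω ((i.castSucc : Fin (t + 1)) : ℕ)) = fun i : Fin t => ω (i : ℕ) := by
    intro ω; funext i; rw [Fin.coe_castSucc]
  have hLHS : ∫ ω in A \ D, B (g (traj g s₀ ω t) (ω t)) ∂P =
      ∫ y, Set.indicator ((fun y : Fin (t + 1) → Fin n → ℝ =>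
          fun i : Fin t => y i.castSucc) ⁻¹' A'')
        (fun y => B (g (traj g s₀ (extT t fun i : Fin t => y i.castSucc) t)
          (y (Fin.last t)))) y ∂(Measure.pi fun _ : Fin (t + 1) => μ) := by
    rw [← integral_indicator (hFle _ hA'F)]
    have hpt : ∀ ω, Set.indicator (A \ D) (fun ω => B (g (traj g s₀ ω t) (ω t))) ω =
        Set.indicator ((fun y : Fin (t + 1) → Fin n → ℝ =>
            fun i : Fin t => y i.castSucc) ⁻¹' A'')
          (fun y => B (g (traj g s₀ (extT t fun i : Fin t => y i.castSucc) t)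
            (y (Fin.last t))))
          ((fun (ω : ℕ → Fin n → ℝ) (i : Fin (t + 1)) => ω (i : ℕ)) ω) := by
      intro ω
      have hmem : ((fun (ω : ℕ → Fin n → ℝ) (i : Fin (t + 1)) => ω (i : ℕ)) ω ∈
          (fun y : Fin (t + 1) → Fin n → ℝ => fun i : Fin t => y i.castSucc) ⁻¹' A'') ↔
          ω ∈ A \ D := by
        rw [Set.mem_preimage, ← hA''pre, Set.mem_preimage]
        constructor
        · intro h; rwa [hcast ω] at h
        · intro h; rwa [hcast ω]
      by_cases h : ω ∈ A \ D
      · rw [Set.indicator_of_mem h, Set.indicator_of_mem (hmem.mpr h)]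
        simp only [hcast ω, htrajF_restr ω, Fin.val_last]
      · rw [Set.indicator_of_notMem h, Set.indicator_of_notMem (fun hc => h (hmem.mp hc))]
    simp_rw [hpt]
    rw [← hmap (t + 1)]
    refine (integral_map (measurable_restr (t + 1)).aemeasurable ?_).symm
    have hfront : Measurable fun y : Fin (t + 1) → Fin n → ℝ =>
        fun i : Fin t => y i.castSucc :=
      measurable_pi_lambda _ fun i => measurable_pi_apply _
    exact ((hBmeas.comp (hg.comp ((htrajFmeas.comp hfront).prodMk
      (measurable_pi_apply (Fin.last t))))).indicator (hfront hA''m)).aestronglyMeasurable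
  rw [hLHS, hRHS]
  -- split off the last coordinate using Fubini
  have hmp := measurePreserving_piFinSuccAbove (fun _ : Fin (t + 1) => μ) (Fin.last t)
  set Fp : ((Fin n → ℝ) × (Fin t → Fin n → ℝ)) → ℝ :=
    Set.indicator (Prod.snd ⁻¹' A'')
      (fun p => B (g (traj g s₀ (extT t p.2) t) p.1)) with hFpdef
  have happ : ∀ y : Fin (t + 1) → Fin n → ℝ,
      (MeasurableEquiv.piFinSuccAbove (fun _ : Fin (t + 1) => Fin n → ℝ) (Fin.last t)) y =
        (y (Fin.last t), fun i : Fin t => y i.castSucc) := by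
    intro y
    have h2 : (Fin.last t).removeNth y = fun i : Fin t => y i.castSucc := by
      funext i
      rw [Fin.removeNth, Fin.succAbove_last]
    show (y (Fin.last t), (Fin.last t).removeNth y) = _
    rw [h2]
  have hcomp : ∀ y : Fin (t + 1) → Fin n → ℝ,
      Set.indicator ((fun y : Fin (t + 1) → Fin n → ℝ =>
          fun i : Fin t => y i.castSucc) ⁻¹' A'')
        (fun y => B (g (traj g s₀ (extT t fun i : Fin t => y i.castSucc) t)
          (y (Fin.last t)))) y =
      Fp ((MeasurableEquiv.piFinSuccAbove (fun _ : Fin (t + 1) => Fin n → ℝ)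
        (Fin.last t)) y) := by
    intro y
    rw [happ y, hFpdef]
    by_cases h : (fun i : Fin t => y i.castSucc) ∈ A''
    · rw [Set.indicator_of_mem (by exact h), Set.indicator_of_mem (by exact h)]
    · rw [Set.indicator_of_notMem (by exact h), Set.indicator_of_notMem (by exact h)]
  have hFpmeas : Measurable Fp :=
    (hBmeas.comp (hg.comp (((measurable_traj_of hg (m := inferInstance)
        (fun j _ => measurable_pi_apply j) le_rfl).comp
      ((measurable_extT t).comp measurable_snd)).prodMk measurable_fst))).indicator
      (measurable_snd hA''m)
  have hFpint : Integrable Fp ((μ.prod (Measure.pi fun _ : Fin t => μ))) := by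
    refine ⟨hFpmeas.aestronglyMeasurable, ?_⟩
    apply MeasureTheory.HasFiniteIntegral.of_bounded (C := |C|)
    filter_upwards with p
    rw [Real.norm_eq_abs, hFpdef]
    by_cases h : p ∈ Prod.snd ⁻¹' A''
    · rw [Set.indicator_of_mem h]
      exact (hC _).trans (le_abs_self C)
    · rw [Set.indicator_of_notMem h]
      simp [abs_nonneg]
  have hstep1 : ∫ y, Set.indicator ((fun y : Fin (t + 1) → Fin n → ℝ =>
          fun i : Fin t => y i.castSucc) ⁻¹' A'')
        (fun y => B (g (traj g s₀ (extT t fun i : Fin t => y i.castSucc) t)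
          (y (Fin.last t)))) y ∂(Measure.pi fun _ : Fin (t + 1) => μ) =
      ∫ p, Fp p ∂(μ.prod (Measure.pi fun _ : Fin t => μ)) := by
    simp_rw [hcomp]
    exact hmp.integral_comp (MeasurableEquiv.measurableEmbedding _) Fp
  have hstep2 : ∫ p, Fp p ∂(μ.prod (Measure.pi fun _ : Fin t => μ)) =
      ∫ z, Set.indicator A'' (fun z => ∫ δ, B (g (traj g s₀ (extT t z) t) δ) ∂μ) z
        ∂(Measure.pi fun _ : Fin t => μ) := by
    rw [MeasureTheory.integral_prod_symm Fp hFpint]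
    refine integral_congr_ae (Filter.Eventually.of_forall fun z => ?_)
    show (∫ δ, Fp (δ, z) ∂μ) = _
    by_cases h : z ∈ A''
    · rw [Set.indicator_of_mem h]
      have hfun : (fun δ : Fin n → ℝ => Fp (δ, z)) =
          fun δ => B (g (traj g s₀ (extT t z) t) δ) := by
        funext δ
        rw [hFpdef]
        exact Set.indicator_of_mem
          (show ((δ, z) : (Fin n → ℝ) × (Fin t → Fin n → ℝ)) ∈ Prod.snd ⁻¹' A'' from h) _
      rw [hfun]
    · rw [Set.indicator_of_notMem h]
      have hfun : (fun δ : Fin n → ℝ => Fp (δ, z)) = fun _ => (0 : ℝ) := by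
        funext δ
        rw [hFpdef]
        exact Set.indicator_of_notMem
          (show ((δ, z) : (Fin n → ℝ) × (Fin t → Fin n → ℝ)) ∉ Prod.snd ⁻¹' A'' from h) _
      rw [hfun, integral_zero]
  rw [hstep1, hstep2]
  -- compare the two integrals over the finite product pointwise a.e.
  have hKmeas : Measurable fun s : Fin n → ℝ => ∫ δ, B (g s δ) ∂μ := by
    have h1 : StronglyMeasurable fun p : (Fin n → ℝ) × (Fin n → ℝ) => B (g p.1 p.2) :=
      (hBmeas.comp hg).stronglyMeasurable
    exact h1.integral_prod_right'.measurable
  have hKbdd : ∀ s : Fin n → ℝ, |∫ δ, B (g s δ) ∂μ| ≤ C := by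
    intro s
    have h1 : ‖∫ δ, B (g s δ) ∂μ‖ ≤ C * (μ Set.univ).toReal :=
      MeasureTheory.norm_integral_le_of_norm_le_const
        (Filter.Eventually.of_forall fun δ => by rw [Real.norm_eq_abs]; exact hC _)
    rwa [measure_univ, ENNReal.toReal_one, mul_one, Real.norm_eq_abs] at h1
  have hint1 : Integrable (Set.indicator A''
      (fun z => ∫ δ, B (g (traj g s₀ (extT t z) t) δ) ∂μ))
      (Measure.pi fun _ : Fin t => μ) := by
    refine Integrable.indicator ⟨((hKmeas.comp htrajFmeas)).aestronglyMeasurable, ?_⟩ hA''m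
    apply MeasureTheory.HasFiniteIntegral.of_bounded (C := C)
    filter_upwards with z
    rw [Real.norm_eq_abs]
    exact hKbdd _
  have hint2 : Integrable (Set.indicator A''
      (fun z => B (traj g s₀ (extT t z) t))) (Measure.pi fun _ : Fin t => μ) := by
    refine Integrable.indicator ⟨(hBmeas.comp htrajFmeas).aestronglyMeasurable, ?_⟩ hA''m
    apply MeasureTheory.HasFiniteIntegral.of_bounded (C := C)
    filter_upwards with z
    rw [Real.norm_eq_abs]
    exact hC _
  have hgoodz : ∀ᵐ z ∂(Measure.pi fun _ : Fin t => μ), ∀ i : Fin t, z i ∈ W := by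
    have h1 : (Measure.pi fun _ : Fin t => μ) (Set.pi Set.univ fun _ : Fin t => W) = 1 := by
      rw [Measure.pi_pi]
      simp [hμW]
    have hcompl : (Measure.pi fun _ : Fin t => μ)
        ((Set.pi Set.univ fun _ : Fin t => W)ᶜ) = 0 := by
      rw [measure_compl (MeasurableSet.univ_pi fun _ => hWmeas) (measure_ne_top _ _), h1,
        measure_univ, tsub_self]
    rw [MeasureTheory.ae_iff]
    refine measure_mono_null ?_ hcompl
    intro z hz
    intro hc
    exact hz fun i => hc i trivial
  refine integral_mono_ae hint1 hint2 ?_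
  filter_upwards [hgoodz] with z hz
  by_cases h : z ∈ A''
  · rw [Set.indicator_of_mem h, Set.indicator_of_mem h]
    have hzS : traj g s₀ (extT t z) t ∈ S := by
      refine htrajS _ t fun j hj => ?_
      rw [show extT t z j = z ⟨j, hj⟩ from dif_pos hj]
      exact hz ⟨j, hj⟩
    have hzSu : traj g s₀ (extT t z) t ∉ Su := by
      have hmemA' : extT t z ∈ A \ D := by
        rw [← hA''pre, Set.mem_preimage, restr_extT]
        exact h
      have hnotD : extT t z ∉ D := hmemA'.2
      have hst : stopN g Su s₀ t (extT t z) = t := (stopN_eq_or_mem t).resolve_right hnotD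
      rw [hDdef, Set.mem_setOf_eq, hst] at hnotD
      exact hnotD
    exact hdec _ ⟨hzS, hzSu⟩
  · rw [Set.indicator_of_notMem h, Set.indicator_of_notMem h]
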